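/- For every σ ∈ ℝ^n_+, the matrix 𝓕(σ) − F(σ) is positive semidefinite, i.e., the true-solution measurement matrix dominates the Galerkin-approximated measurement matrix in the Loewner order. -/

import Mathlib

open scoped BigOperators

/-- For every `σ ∈ ℝ^n_+`, the matrix `𝓕(σ) − F(σ)` is positive
semidefinite, i.e., the true-solution measurement matrix dominates the
Galerkin-approximated measurement matrix in the Loewner order. -/
theorem stmt_17
    {H : Type*} [NormedAddCommGroup H] [InnerProductSpace ℝ H] [CompleteSpace H]
    {n m : ℕ}
    (b0 : H →L[ℝ] H →L[ℝ] ℝ) (b : Fin n → H →L[ℝ] H →L[ℝ] ℝ)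
    (hb0symm : ∀ u v : H, b0 u v = b0 v u)
    (hb0pos : ∀ v : H, 0 ≤ b0 v v)
    (hbsymm : ∀ i, ∀ u v : H, b i u v = b i v u)
    (hbpos : ∀ i, ∀ v : H, 0 ≤ b i v v)
    (C β : ℝ) (hβ : 0 < β) (hCβ : β ≤ C)
    (hcoer : ∀ v : H, β * ‖v‖ ^ 2 ≤ b0 v v + ∑ i, b i v v)
    (hbound : ∀ v : H, b0 v v + ∑ i, b i v v ≤ C * ‖v‖ ^ 2)
    (u : (Fin n → ℝ) → (H →L[ℝ] ℝ) → H)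
    (hu : ∀ σ : Fin n → ℝ, (∀ i, 0 < σ i) → ∀ l : H →L[ℝ] ℝ,
      ∀ v : H, b0 (u σ l) v + ∑ i, σ i * b i (u σ l) v = l v)
    (V : Submodule ℝ H) [FiniteDimensional ℝ V]
    (ut : (Fin n → ℝ) → (H →L[ℝ] ℝ) → H)
    (hmem : ∀ σ l, ut σ l ∈ V)
    (hut : ∀ σ : Fin n → ℝ, (∀ i, 0 < σ i) → ∀ l : H →L[ℝ] ℝ,
      ∀ v ∈ V, b0 (ut σ l) v + ∑ i, σ i * b i (ut σ l) v = l v)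
    (l : Fin m → (H →L[ℝ] ℝ)) :
    ∀ σ : Fin n → ℝ, (∀ i, 0 < σ i) →
      Matrix.PosSemidef
        (Matrix.of fun j k : Fin m => l k (u σ (l j)) - l k (ut σ (l j))) := by
  intro σ hσ
  set B : H → H → ℝ := fun x y => b0 x y + ∑ i, σ i * b i x y with hBdef
  have hBsymm : ∀ x y, B x y = B y x := by
    intro x y
    simp only [hBdef]
    rw [hb0symm]
    congr 1
    exact Finset.sum_congr rfl fun i _ => by rw [hbsymm]
  have hBpos : ∀ x, 0 ≤ B x x := fun x =>
    add_nonneg (hb0pos x) (Finset.sum_nonneg fun i _ => mul_nonneg (hσ i).le (hbpos i x))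
  set e : Fin m → H := fun j => u σ (l j) - ut σ (l j) with hedef
  -- linearity in the first argument
  have hBsub : ∀ x y w : H, B (x - y) w = B x w - B y w := by
    intro x y w
    simp only [hBdef, map_sub, ContinuousLinearMap.sub_apply, mul_sub,
      Finset.sum_sub_distrib]
    ring
  have hBsum : ∀ (c : Fin m → ℝ) (y : H),
      B (∑ k, c k • e k) y = ∑ k, c k * B (e k) y := by
    intro c y
    simp only [hBdef, map_sum, map_smul, ContinuousLinearMap.sum_apply,
      ContinuousLinearMap.smul_apply, smul_eq_mul, Finset.mul_sum, mul_add,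
      Finset.sum_add_distrib]
    congr 1
    rw [Finset.sum_comm]
    apply Finset.sum_congr rfl
    intro k _
    apply Finset.sum_congr rfl
    intro i _
    ring
  -- Galerkin orthogonality
  have hgal : ∀ j : Fin m, ∀ w ∈ V, B (e j) w = 0 := by
    intro j w hw
    have h1 := hu σ hσ (l j) w
    have h2 := hut σ hσ (l j) w hw
    have : B (e j) w = B (u σ (l j)) w - B (ut σ (l j)) w := hBsub _ _ _
    rw [this]
    simp only [hBdef] at *
    rw [h1, h2, sub_self]
  -- entries of the matrix
  have hentry : ∀ j k : Fin m, l k (u σ (l j)) - l k (ut σ (l j)) = B (e k) (e j) := by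
    intro j k
    have h1 : B (u σ (l k)) (e j) = l k (e j) := hu σ hσ (l k) (e j)
    have h2 : B (ut σ (l k)) (e j) = 0 := by
      rw [hBsymm]; exact hgal j _ (hmem σ (l k))
    have h3 : B (e k) (e j) = l k (e j) := by
      rw [hedef]
      simp only
      rw [hBsub, h1, h2, sub_zero]
    rw [h3, hedef]
    simp only [map_sub]
  rw [Matrix.posSemidef_iff_dotProduct_mulVec]
  constructor
  · rw [Matrix.IsHermitian]
    ext j k
    simp only [Matrix.conjTranspose_apply, Matrix.of_apply, star_trivial]
    rw [hentry k j, hentry j k, hBsymm]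
  · intro x
    have hq : dotProduct (star x) ((Matrix.of fun j k : Fin m =>
        l k (u σ (l j)) - l k (ut σ (l j))).mulVec x)
        = B (∑ j, x j • e j) (∑ j, x j • e j) := by
      simp only [dotProduct, Matrix.mulVec, Matrix.of_apply, Pi.star_apply,
        star_trivial]
      rw [hBsum]
      apply Finset.sum_congr rfl
      intro j _
      rw [hBsymm, hBsum]
      simp only [Finset.mul_sum]
      apply Finset.sum_congr rfl
      intro k _
      rw [hentry j k]
      ring
    rw [hq]
    exact hBpos _
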